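/- Let G = ⟨V, Σ, P, S⟩ be a context-free grammar and set V' = V \ {S}. For each A ∈ V', let G_A = ⟨V', Σ, P_A, A⟩ be the context-free grammar with axiom A whose productions P_A are exactly the productions B → γ of G with B ∈ V' and γ ∈ (V' ∪ Σ)*, and let L_A = L(G_A) be its language. Then L(G) equals the union, over all productions S → β of G with β ∈ (V' ∪ Σ)*, of the languages C_S ⋄ (w_1 L_{A_1} w_2 L_{A_2} ⋯ w_ℓ L_{A_ℓ} w_{ℓ+1}), where β is factorized as β = w_1 A_1 w_2 A_2 ⋯ w_ℓ A_ℓ w_{ℓ+1} with w_1,…,w_{ℓ+1} ∈ Σ* and A_1,…,A_ℓ ∈ V'. -/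

import Mathlib

/-- One derivation step of the grammar `g` using only productions `B → γ` with
`B ≠ S` and `γ` containing no occurrence of the nonterminal `S`
(these are exactly the productions of the grammars `G_A` of the structuring). -/
def ProducesAvoiding {T : Type*} (g : ContextFreeGrammar T)
    (u v : List (Symbol T g.NT)) : Prop :=
  ∃ r ∈ g.rules, r.input ≠ g.initial ∧
    Symbol.nonterminal g.initial ∉ r.output ∧ r.Rewrites u v

/-- The language `L_A` generated by the grammar `G_A = ⟨V', Σ, P_A, A⟩`, whose productions
are exactly the productions of `g` not involving the axiom `S`. -/
def subLanguage {T : Type*} (g : ContextFreeGrammar T) (A : g.NT) : Language T :=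
  {w : List T | Relation.ReflTransGen (ProducesAvoiding g)
    [Symbol.nonterminal A] (w.map Symbol.terminal)}

/-- The language associated with a single symbol: a terminal `a` yields `{a}`;
a nonterminal `A` yields `L_A`. -/
def symbolLanguage {T : Type*} (g : ContextFreeGrammar T) :
    Symbol T g.NT → Language T
  | Symbol.terminal a => {[a]}
  | Symbol.nonterminal A => subLanguage g A

/-- For `β = w₁ A₁ w₂ A₂ ⋯ w_ℓ A_ℓ w_{ℓ+1}`, the concatenation language
`w₁ L_{A₁} w₂ L_{A₂} ⋯ w_ℓ L_{A_ℓ} w_{ℓ+1}`. -/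
def substLanguage {T : Type*} (g : ContextFreeGrammar T)
    (β : List (Symbol T g.NT)) : Language T :=
  (β.map (symbolLanguage g)).prod

section Aux
variable {T : Type*} {g : ContextFreeGrammar T}

lemma pa_append (p q : List (Symbol T g.NT)) {u v : List (Symbol T g.NT)}
    (h : ProducesAvoiding g u v) : ProducesAvoiding g (p ++ u ++ q) (p ++ v ++ q) := by
  obtain ⟨r, hr, h1, h2, hw⟩ := h
  exact ⟨r, hr, h1, h2, (hw.append_left p).append_right q⟩

lemma da_append (p q : List (Symbol T g.NT)) {u v : List (Symbol T g.NT)}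
    (h : Relation.ReflTransGen (ProducesAvoiding g) u v) :
    Relation.ReflTransGen (ProducesAvoiding g) (p ++ u ++ q) (p ++ v ++ q) := by
  induction h with
  | refl => rfl
  | tail _ hs ih => exact ih.tail (pa_append p q hs)

lemma derives_of_da {u v : List (Symbol T g.NT)}
    (h : Relation.ReflTransGen (ProducesAvoiding g) u v) : g.Derives u v := by
  induction h with
  | refl => rfl
  | tail _ hs ih => exact ih.tail (by obtain ⟨r, hr, _, _, hw⟩ := hs; exact ⟨r, hr, hw⟩)

lemma substLanguage_append (a b : List (Symbol T g.NT)) :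
    substLanguage g (a ++ b) = substLanguage g a * substLanguage g b := by
  simp [substLanguage]

lemma substLanguage_singleton (s : Symbol T g.NT) :
    substLanguage g [s] = symbolLanguage g s := by
  simp [substLanguage]

lemma da_of_mem_substLanguage : ∀ (β : List (Symbol T g.NT)) {x : List T},
    x ∈ substLanguage g β →
    Relation.ReflTransGen (ProducesAvoiding g) β (x.map Symbol.terminal) := by
  intro β
  induction β with
  | nil =>
    intro x hx
    have : x = [] := by simpa [substLanguage, Language.mem_one] using hx
    subst this
    rfl
  | cons s β ih =>
    intro x hx
    rw [substLanguage, List.map_cons, List.prod_cons] at hx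
    obtain ⟨x₁, hx₁, x₂, hx₂, rfl⟩ := Language.mem_mul.mp hx
    have h2 := ih hx₂
    rw [List.map_append]
    cases s with
    | terminal a =>
      have : x₁ = [a] := hx₁
      subst this
      have := da_append [Symbol.terminal a] ([] : List (Symbol T g.NT)) h2
      simpa using this
    | nonterminal A =>
      have h1 : Relation.ReflTransGen (ProducesAvoiding g)
          [Symbol.nonterminal A] (x₁.map Symbol.terminal) := hx₁
      have step1 := da_append ([] : List (Symbol T g.NT)) β h1
      have step2 := da_append (x₁.map Symbol.terminal) ([] : List (Symbol T g.NT)) h2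
      simp only [List.nil_append, List.append_nil] at step1 step2
      exact step1.trans step2

lemma terminal_mem_substLanguage (w : List T) :
    w ∈ substLanguage g (w.map Symbol.terminal) := by
  induction w with
  | nil => simp [substLanguage, Language.mem_one]
  | cons a w ih =>
    rw [List.map_cons, substLanguage, List.map_cons, List.prod_cons]
    exact Language.mem_mul.mpr ⟨[a], by simp [symbolLanguage]; rfl, w, ih, rfl⟩

lemma mem_substLanguage_of_da {β : List (Symbol T g.NT)} {w : List T}
    (h : Relation.ReflTransGen (ProducesAvoiding g) β (w.map Symbol.terminal)) :
    w ∈ substLanguage g β := by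
  induction h using Relation.ReflTransGen.head_induction_on with
  | refl => exact terminal_mem_substLanguage w
  | head hstep _ ih =>
    obtain ⟨r, hr, hne, hout, hw⟩ := hstep
    obtain ⟨p, q, rfl, rfl⟩ := hw.exists_parts
    rw [substLanguage_append, substLanguage_append] at ih
    obtain ⟨u, hu, v, hv, rfl⟩ := Language.mem_mul.mp ih
    obtain ⟨u₁, hu₁, m, hm, rfl⟩ := Language.mem_mul.mp hu
    have hmB : m ∈ subLanguage g r.input :=
      Relation.ReflTransGen.head ⟨r, hr, hne, hout, ContextFreeRule.Rewrites.input_output⟩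
        (da_of_mem_substLanguage _ hm)
    rw [substLanguage_append, substLanguage_append, substLanguage_singleton]
    exact Language.mem_mul.mpr ⟨u₁ ++ m, Language.mem_mul.mpr ⟨u₁, hu₁, m, hmB, rfl⟩, v, hv, rfl⟩

lemma nt_mem_of_da {u v : List (Symbol T g.NT)}
    (h : Relation.ReflTransGen (ProducesAvoiding g) u v)
    (hm : Symbol.nonterminal g.initial ∈ u) : Symbol.nonterminal g.initial ∈ v := by
  induction h with
  | refl => exact hm
  | tail _ hs ih =>
    obtain ⟨r, hr, hne, hout, hw⟩ := hs
    obtain ⟨p, q, rfl, rfl⟩ := hw.exists_parts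
    simp only [List.append_assoc, List.mem_append, List.mem_singleton] at ih ⊢
    rcases ih with h | h | h
    · exact Or.inl h
    · exact absurd (Symbol.nonterminal.inj h).symm hne
    · exact Or.inr (Or.inr h)

lemma structuring_main {α : List (Symbol T g.NT)} {w : List T}
    (h : g.Derives α (w.map Symbol.terminal)) :
    Relation.ReflTransGen (ProducesAvoiding g) α (w.map Symbol.terminal) ∨
    ∃ u v x : List T,
      g.Derives α (u.map Symbol.terminal ++ [Symbol.nonterminal g.initial] ++
        v.map Symbol.terminal) ∧
      (∃ r ∈ g.rules, r.input = g.initial ∧ Symbol.nonterminal g.initial ∉ r.output ∧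
        x ∈ substLanguage g r.output) ∧ w = u ++ x ++ v := by
  induction h using Relation.ReflTransGen.head_induction_on with
  | refl => exact Or.inl .refl
  | head hstep _ ih =>
    rcases ih with ih | ⟨u, v, x, hd, hrx, hw⟩
    · obtain ⟨r, hr, hrw⟩ := hstep
      by_cases hout : Symbol.nonterminal g.initial ∈ r.output
      · exfalso
        obtain ⟨p, q, rfl, rfl⟩ := hrw.exists_parts
        have : Symbol.nonterminal g.initial ∈ w.map Symbol.terminal :=
          nt_mem_of_da ih (by simp [hout])
        simp at this
      · by_cases hin : r.input = g.initial
        · obtain ⟨p, q, rfl, rfl⟩ := hrw.exists_parts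
          have hmem := mem_substLanguage_of_da ih
          rw [substLanguage_append, substLanguage_append] at hmem
          obtain ⟨u', hu', v', hv', rfl⟩ := Language.mem_mul.mp hmem
          obtain ⟨u, hu, x, hx, rfl⟩ := Language.mem_mul.mp hu'
          have h1 : Relation.ReflTransGen (ProducesAvoiding g)
              (p ++ [Symbol.nonterminal r.input] ++ q)
              (u.map Symbol.terminal ++ [Symbol.nonterminal r.input] ++ q) := by
            have := da_append ([] : List (Symbol T g.NT))
              ([Symbol.nonterminal r.input] ++ q) (da_of_mem_substLanguage _ hu)
            simpa [List.append_assoc] using this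
          have h2 : Relation.ReflTransGen (ProducesAvoiding g)
              (u.map Symbol.terminal ++ [Symbol.nonterminal r.input] ++ q)
              (u.map Symbol.terminal ++ [Symbol.nonterminal r.input] ++
                v'.map Symbol.terminal) := by
            have := da_append (u.map Symbol.terminal ++ [Symbol.nonterminal r.input])
              ([] : List (Symbol T g.NT)) (da_of_mem_substLanguage _ hv')
            simpa [List.append_assoc] using this
          right
          refine ⟨u, v', x, ?_, ⟨r, hr, hin, hout, hx⟩, by simp [List.append_assoc]⟩
          rw [← hin]
          exact derives_of_da (h1.trans h2)
        · exact Or.inl (ih.head ⟨r, hr, hin, hout, hrw⟩)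
    · exact Or.inr ⟨u, v, x, hstep.trans_derives hd, hrx, hw⟩

end Aux


/-- Structuring of a context-free language: `L(G)` is the union, over the
productions `S → β` of `G` whose right-hand side `β` avoids the axiom `S`, of the languages
`C_S ⋄ (w₁ L_{A₁} w₂ L_{A₂} ⋯ w_ℓ L_{A_ℓ} w_{ℓ+1})`, where
`C_S = {(u,v) : S ⇒* u S v}` and `β = w₁ A₁ w₂ ⋯ w_ℓ A_ℓ w_{ℓ+1}`. -/
theorem language_eq_union_sandwich {T : Type*} (g : ContextFreeGrammar T) :
    g.language =
      ⋃ r ∈ {r : ContextFreeRule T g.NT | r ∈ g.rules ∧ r.input = g.initial ∧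
          Symbol.nonterminal g.initial ∉ r.output},
        {w : List T | ∃ u v x : List T,
          g.Derives [Symbol.nonterminal g.initial]
            (u.map Symbol.terminal ++ [Symbol.nonterminal g.initial] ++
              v.map Symbol.terminal) ∧
          x ∈ substLanguage g r.output ∧ w = u ++ x ++ v} := by
  ext w
  rw [ContextFreeGrammar.mem_language_iff]
  refine Iff.trans ?_ Set.mem_iUnion₂.symm
  constructor
  · intro h
    rcases structuring_main h with h | ⟨u, v, x, hd, ⟨r, hr, hin, hout, hx⟩, hw⟩
    · have := nt_mem_of_da h (by simp)
      simp at this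
    · exact ⟨r, ⟨hr, hin, hout⟩, u, v, x, hd, hx, hw⟩
  · rintro ⟨r, ⟨hr, hin, hout⟩, u, v, x, hd, hx, rfl⟩
    have h1 : g.Produces
        (u.map Symbol.terminal ++ [Symbol.nonterminal g.initial] ++ v.map Symbol.terminal)
        (u.map Symbol.terminal ++ r.output ++ v.map Symbol.terminal) :=
      ⟨r, hr, by rw [← hin]; exact ContextFreeRule.rewrites_of_exists_parts r _ _⟩
    have h2 : g.Derives r.output (x.map Symbol.terminal) :=
      derives_of_da (da_of_mem_substLanguage _ hx)
    have h3 := (h2.append_left (u.map Symbol.terminal)).append_right (v.map Symbol.terminal)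
    have := hd.trans (h1.trans_derives h3)
    simpa [List.append_assoc] using this
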